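/- Let X be a nonempty finite set, p a probability vector on X with positive entries, d : X × X → [0,∞), s_D ≥ 0, s_P ≥ 0, and f : (0,∞) → ℝ convex and differentiable with f(1) = 0; set g(a,b) := f(a/b) − (a/b)·f'(a/b). Let q be a probability vector on X with positive entries such that, with A(x,y) := exp(−s_D·d(x,y) − s_P·g(p(y), q(y))), one has c(y) := Σ_x p(x)A(x,y) / (Σ_i q(i)A(x,i)) = 1 for every y ∈ X, and define Q(y|x) := q(y)A(x,y)/Σ_i q(i)A(x,i). Then: (i) the output marginal of Q equals q; (ii) for every stochastic matrix Q' on X with positive output marginal Q'm, I(p,Q) + s_D·Σ_{x,y} p(x)Q(y|x)d(x,y) + s_P·D_f(p||q) ≤ I(p,Q') + s_D·Σ_{x,y} p(x)Q'(y|x)d(x,y) + s_P·D_f(p||Q'm); and consequently (iii) Q attains the rate-distortion-perception function at its own operating point, i.e. I(p,Q) = R(D,P) where D = Σ_{x,y} p(x)Q(y|x)d(x,y) and P = D_f(p||q). -/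

import Mathlib

namespace RDP

variable {X : Type*}

/-- Output marginal of a channel `Q` under input distribution `p`. -/
noncomputable def marg [Fintype X] (p : X → ℝ) (Q : X → X → ℝ) (y : X) : ℝ :=
  ∑ x, p x * Q x y

/-- Mutual information `I(p,Q) = Σ_{x,y} p(x)Q(y|x) log(Q(y|x)/Qm(y))`
(the convention `0 · log 0 = 0` holds since `Real.log 0 = 0`). -/
noncomputable def mutInfo [Fintype X] (p : X → ℝ) (Q : X → X → ℝ) : ℝ :=
  ∑ x, ∑ y, p x * Q x y * Real.log (Q x y / marg p Q y)

/-- Average distortion `Σ_{x,y} p(x)Q(y|x) d(x,y)`. -/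
noncomputable def distortion [Fintype X] (p : X → ℝ) (d : X → X → ℝ) (Q : X → X → ℝ) : ℝ :=
  ∑ x, ∑ y, p x * Q x y * d x y

/-- f-divergence `D_f(p‖q) = Σ_x q(x) f(p(x)/q(x))`. -/
noncomputable def fDiv [Fintype X] (f : ℝ → ℝ) (p q : X → ℝ) : ℝ :=
  ∑ x, q x * f (p x / q x)

/-- `Q` is a stochastic matrix: nonnegative entries with unit row sums. -/
def IsStochastic [Fintype X] (Q : X → X → ℝ) : Prop :=
  (∀ x y, 0 ≤ Q x y) ∧ ∀ x, ∑ y, Q x y = 1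

/-- The rate-distortion-perception function
`R(D,P) = inf { I(p,Q) : Q stochastic, positive output marginal, distortion ≤ D, D_f ≤ P }`,
with values in `EReal` so that the infimum of the empty set is `⊤`. -/
noncomputable def RDPF [Fintype X] (p : X → ℝ) (d : X → X → ℝ) (f : ℝ → ℝ)
    (D P : ℝ) : EReal :=
  sInf {r : EReal | ∃ Q : X → X → ℝ, IsStochastic Q ∧ (∀ y, 0 < marg p Q y) ∧
    distortion p d Q ≤ D ∧ fDiv f p (marg p Q) ≤ P ∧ r = (mutInfo p Q : EReal)}

/-- The Lagrangian `V(Q) = I(p,Q) + s_D · E[d] + s_P · D_f(p‖Qm)`. -/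
noncomputable def Vfun [Fintype X] (p : X → ℝ) (d : X → X → ℝ) (sD sP : ℝ) (f : ℝ → ℝ)
    (Q : X → X → ℝ) : ℝ :=
  mutInfo p Q + sD * distortion p d Q + sP * fDiv f p (marg p Q)

/-- `μ` is a (complex) eigenvalue of the matrix `M`. -/
def HasEig [Fintype X] (M : Matrix X X ℂ) (μ : ℂ) : Prop :=
  ∃ v : X → ℂ, v ≠ 0 ∧ M.mulVec v = μ • v

lemma tangent_le {f f' : ℝ → ℝ} (hfconv : ConvexOn ℝ (Set.Ioi 0) f)
    (hf' : ∀ x ∈ Set.Ioi (0:ℝ), HasDerivAt f (f' x) x)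
    {a b : ℝ} (ha : 0 < a) (hb : 0 < b) :
    f a + f' a * (b - a) ≤ f b := by
  rcases lt_trichotomy a b with h | h | h
  · have h1 := hfconv.le_slope_of_hasDerivAt ha hb h (hf' a ha)
    rw [slope_def_field] at h1
    have hba : 0 < b - a := sub_pos.mpr h
    rw [le_div_iff₀ hba] at h1
    linarith
  · simp [h]
  · have h1 := hfconv.slope_le_of_hasDerivAt hb ha h (hf' a ha)
    rw [slope_def_field] at h1
    have hab : 0 < a - b := sub_pos.mpr h
    rw [div_le_iff₀ hab] at h1
    linarith

lemma gibbs {ι : Type*} [Fintype ι] (a b : ι → ℝ) (ha : ∀ i, 0 ≤ a i)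
    (hb : ∀ i, 0 < b i) (hab : ∑ i, a i = ∑ i, b i) :
    0 ≤ ∑ i, a i * Real.log (a i / b i) := by
  have key : ∀ i, a i * Real.log (b i / a i) ≤ b i - a i := by
    intro i
    rcases eq_or_lt_of_le (ha i) with h | h
    · simp [← h]; exact (hb i).le
    · have hpos : 0 < b i / a i := div_pos (hb i) h
      have h2 := Real.log_le_sub_one_of_pos hpos
      calc a i * Real.log (b i / a i) ≤ a i * (b i / a i - 1) :=
            mul_le_mul_of_nonneg_left h2 (ha i)
        _ = b i - a i := by field_simp
  have h1 : ∑ i, a i * Real.log (b i / a i) ≤ 0 := by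
    calc ∑ i, a i * Real.log (b i / a i) ≤ ∑ i, (b i - a i) :=
          Finset.sum_le_sum (fun i _ => key i)
      _ = 0 := by rw [Finset.sum_sub_distrib, hab, sub_self]
  have h2 : ∑ i, a i * Real.log (a i / b i) = - ∑ i, a i * Real.log (b i / a i) := by
    rw [← Finset.sum_neg_distrib]
    apply Finset.sum_congr rfl
    intro i _
    rcases eq_or_lt_of_le (ha i) with h | h
    · simp [← h]
    · rw [Real.log_div (ne_of_gt h) (ne_of_gt (hb i)),
        Real.log_div (ne_of_gt (hb i)) (ne_of_gt h)]
      ring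
  linarith


/-- If `c(y) = Σ_x p(x)A(x,y)/(Σ_i q(i)A(x,i)) = 1` for every `y`, then the induced transition
matrix `Q` has output marginal `q`, minimizes the Lagrangian, and attains the
rate-distortion-perception function at its own operating point. -/
theorem optimality_condition_attains_RDPF [Fintype X] [Nonempty X]
    (p : X → ℝ) (hp : ∀ x, 0 < p x) (hp1 : ∑ x, p x = 1)
    (d : X → X → ℝ) (hd : ∀ x y, 0 ≤ d x y)
    (sD sP : ℝ) (hsD : 0 ≤ sD) (hsP : 0 ≤ sP)
    (f f' : ℝ → ℝ) (hfconv : ConvexOn ℝ (Set.Ioi 0) f)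
    (hf' : ∀ x ∈ Set.Ioi (0 : ℝ), HasDerivAt f (f' x) x) (hf1 : f 1 = 0)
    (q : X → ℝ) (hq : ∀ y, 0 < q y) (hq1 : ∑ y, q y = 1)
    (A : X → X → ℝ)
    (hA : ∀ x y, A x y = Real.exp (-(sD * d x y) - sP *
        (f (p y / q y) - p y / q y * f' (p y / q y))))
    (hc : ∀ y, ∑ x, p x * A x y / (∑ i, q i * A x i) = 1)
    (Q : X → X → ℝ) (hQdef : ∀ x y, Q x y = q y * A x y / ∑ i, q i * A x i) :
    (∀ y, marg p Q y = q y)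
    ∧ (∀ Q' : X → X → ℝ, IsStochastic Q' → (∀ y, 0 < marg p Q' y) →
        mutInfo p Q + sD * distortion p d Q + sP * fDiv f p q
          ≤ mutInfo p Q' + sD * distortion p d Q' + sP * fDiv f p (marg p Q'))
    ∧ (mutInfo p Q : EReal) = RDPF p d f (distortion p d Q) (fDiv f p q) := by
  classical
  set g : X → ℝ := fun y => f (p y / q y) - p y / q y * f' (p y / q y) with hgdef
  have hApos : ∀ x y, 0 < A x y := fun x y => by rw [hA]; exact Real.exp_pos _
  have hlam : ∀ x, 0 < ∑ i, q i * A x i := fun x =>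
    Finset.sum_pos (fun i _ => mul_pos (hq i) (hApos x i)) Finset.univ_nonempty
  have hQpos : ∀ x y, 0 < Q x y := fun x y => by
    rw [hQdef]; exact div_pos (mul_pos (hq y) (hApos x y)) (hlam x)
  have hQrow : ∀ x, ∑ y, Q x y = 1 := by
    intro x
    have : ∑ y, Q x y = (∑ y, q y * A x y) / (∑ i, q i * A x i) := by
      rw [Finset.sum_div]; exact Finset.sum_congr rfl fun y _ => hQdef x y
    rw [this, div_self (ne_of_gt (hlam x))]
  have hmarg : ∀ y, marg p Q y = q y := by
    intro y
    calc marg p Q y = ∑ x, q y * (p x * A x y / (∑ i, q i * A x i)) := by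
          refine Finset.sum_congr rfl fun x _ => ?_
          rw [hQdef]; ring
      _ = q y * ∑ x, p x * A x y / (∑ i, q i * A x i) := by rw [Finset.mul_sum]
      _ = q y := by rw [hc y, mul_one]
  have hlog : ∀ x y, Real.log (Q x y / q y)
      = (-(sD * d x y) - sP * g y) - Real.log (∑ i, q i * A x i) := by
    intro x y
    have h1 : Q x y / q y = A x y / (∑ i, q i * A x i) := by
      rw [hQdef, div_div, mul_comm (∑ i, q i * A x i) (q y), ← div_div,
        mul_div_cancel_left₀ _ (ne_of_gt (hq y))]
    rw [h1, Real.log_div (ne_of_gt (hApos x y)) (ne_of_gt (hlam x)), hA, Real.log_exp]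
  set S1 : ℝ := ∑ x, p x * Real.log (∑ i, q i * A x i) with hS1
  set S2 : ℝ := ∑ y, q y * g y with hS2
  set S3 : ℝ := ∑ y, p y * f' (p y / q y) with hS3
  -- E1
  have hswapQ : ∑ x, ∑ y, p x * Q x y * g y = S2 := by
    rw [Finset.sum_comm, hS2]
    refine Finset.sum_congr rfl fun y _ => ?_
    rw [← Finset.sum_mul, show (∑ x, p x * Q x y) = marg p Q y from rfl, hmarg y]
  have hE1 : mutInfo p Q = -(sD * distortion p d Q) - sP * S2 - S1 := by
    have step : mutInfo p Q = ∑ x, (-(sD * ∑ y, p x * Q x y * d x y)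
        - sP * (∑ y, p x * Q x y * g y) - p x * Real.log (∑ i, q i * A x i)) := by
      unfold mutInfo
      refine Finset.sum_congr rfl fun x _ => ?_
      calc ∑ y, p x * Q x y * Real.log (Q x y / marg p Q y)
          = ∑ y, ((-sD) * (p x * Q x y * d x y) + (-sP) * (p x * Q x y * g y)
            + (-(p x * Real.log (∑ i, q i * A x i))) * Q x y) := by
            refine Finset.sum_congr rfl fun y _ => ?_
            rw [hmarg y, hlog x y]; ring
        _ = _ := by
            simp only [Finset.sum_add_distrib, ← Finset.mul_sum]
            rw [hQrow x]; ring
    rw [step, show distortion p d Q = ∑ x, ∑ y, p x * Q x y * d x y from rfl,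
      ← hswapQ, hS1]
    simp only [Finset.sum_sub_distrib, ← Finset.mul_sum]
    simp only [Finset.sum_neg_distrib, ← Finset.mul_sum]
  -- E2
  have hE2 : fDiv f p q = S2 + S3 := by
    rw [fDiv, hS2, hS3, ← Finset.sum_add_distrib]
    refine Finset.sum_congr rfl fun y _ => ?_
    have hqa : q y * (p y / q y) = p y := by
      rw [mul_comm, div_mul_cancel₀ _ (ne_of_gt (hq y))]
    simp only [hgdef]
    linear_combination f' (p y / q y) * hqa
  have key2 : ∀ Q' : X → X → ℝ, IsStochastic Q' → (∀ y, 0 < marg p Q' y) →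
      mutInfo p Q + sD * distortion p d Q + sP * fDiv f p q
        ≤ mutInfo p Q' + sD * distortion p d Q' + sP * fDiv f p (marg p Q') := by
    intro Q' hst hpos
    -- E3
    have hE3 : (∑ y, marg p Q' y * g y) + S3 ≤ fDiv f p (marg p Q') := by
      rw [fDiv, hS3, ← Finset.sum_add_distrib]
      refine Finset.sum_le_sum fun y _ => ?_
      have ha : (0:ℝ) < p y / q y := div_pos (hp y) (hq y)
      have hb : (0:ℝ) < p y / marg p Q' y := div_pos (hp y) (hpos y)
      have ht := tangent_le hfconv hf' ha hb
      have hmul := mul_le_mul_of_nonneg_left ht (hpos y).le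
      have hid : marg p Q' y * g y + p y * f' (p y / q y)
          = marg p Q' y * (f (p y / q y) + f' (p y / q y) * (p y / marg p Q' y - p y / q y)) := by
        have h1 : marg p Q' y * (p y / marg p Q' y) = p y := by
          rw [mul_comm, div_mul_cancel₀ _ (ne_of_gt (hpos y))]
        simp only [hgdef]
        linear_combination (-(f' (p y / q y))) * h1
      linarith
    -- E4
    have hswapQ' : ∑ x, ∑ y, p x * Q' x y * g y = ∑ y, marg p Q' y * g y := by
      rw [Finset.sum_comm]
      refine Finset.sum_congr rfl fun y _ => ?_
      rw [← Finset.sum_mul, show (∑ x, p x * Q' x y) = marg p Q' y from rfl]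
    have hmargsum : ∑ y, marg p Q' y = 1 := by
      unfold marg
      rw [Finset.sum_comm]
      calc ∑ x, ∑ y, p x * Q' x y = ∑ x, p x := by
            refine Finset.sum_congr rfl fun x _ => ?_
            rw [← Finset.mul_sum, hst.2 x, mul_one]
        _ = 1 := hp1
    have hE4 : -S1 ≤ mutInfo p Q' + sD * distortion p d Q'
        + sP * (∑ y, marg p Q' y * g y) := by
      have hgibbs : 0 ≤ ∑ z : X × X, (p z.1 * Q' z.1 z.2) * Real.log ((p z.1 * Q' z.1 z.2)
          / (p z.1 * Q z.1 z.2 * (marg p Q' z.2 / q z.2))) := by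
        apply gibbs
        · intro z; exact mul_nonneg (hp z.1).le (hst.1 z.1 z.2)
        · intro z
          exact mul_pos (mul_pos (hp z.1) (hQpos z.1 z.2)) (div_pos (hpos z.2) (hq z.2))
        · rw [Fintype.sum_prod_type, Fintype.sum_prod_type]
          have hA1 : ∑ x, ∑ y, p x * Q' x y = 1 := by
            calc ∑ x, ∑ y, p x * Q' x y = ∑ x, p x := by
                  refine Finset.sum_congr rfl fun x _ => ?_
                  rw [← Finset.mul_sum, hst.2 x, mul_one]
              _ = 1 := hp1
          have hB1 : ∑ x, ∑ y, p x * Q x y * (marg p Q' y / q y) = 1 := by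
            rw [Finset.sum_comm]
            calc ∑ y, ∑ x, p x * Q x y * (marg p Q' y / q y)
                = ∑ y, marg p Q' y := by
                  refine Finset.sum_congr rfl fun y _ => ?_
                  rw [← Finset.sum_mul, show (∑ x, p x * Q x y) = marg p Q y from rfl,
                    hmarg y, mul_comm, div_mul_cancel₀ _ (ne_of_gt (hq y))]
              _ = 1 := hmargsum
          rw [hA1, hB1]
      rw [Fintype.sum_prod_type] at hgibbs
      have stepA : mutInfo p Q' + sD * distortion p d Q' + sP * (∑ y, marg p Q' y * g y)
          = (∑ x, ∑ y, (p x * Q' x y) * Real.log ((p x * Q' x y)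
              / (p x * Q x y * (marg p Q' y / q y)))) - S1 := by
        have key : ∀ x y, (p x * Q' x y) * Real.log ((p x * Q' x y)
            / (p x * Q x y * (marg p Q' y / q y)))
            = p x * Q' x y * Real.log (Q' x y / marg p Q' y)
              + sD * (p x * Q' x y * d x y) + sP * (p x * Q' x y * g y)
              + (p x * Real.log (∑ i, q i * A x i)) * Q' x y := by
          intro x y
          rcases eq_or_lt_of_le (hst.1 x y) with hz | hz
          · simp [← hz]
          · have h1 : sD * d x y + sP * g y
                = -Real.log (Q x y / q y) - Real.log (∑ i, q i * A x i) := by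
              have := hlog x y; linarith
            have harg : (p x * Q' x y) / (p x * Q x y * (marg p Q' y / q y))
                = (Q' x y / marg p Q' y) / (Q x y / q y) := by
              have h2 := (hp x).ne'
              have h3 := (hQpos x y).ne'
              have h4 := (hq y).ne'
              have h5 := (hpos y).ne'
              field_simp
            rw [harg, Real.log_div (ne_of_gt (div_pos hz (hpos y)))
              (ne_of_gt (div_pos (hQpos x y) (hq y)))]
            linear_combination (-(p x * Q' x y)) * h1
        have hsum : ∑ x, ∑ y, (p x * Q' x y) * Real.log ((p x * Q' x y)
            / (p x * Q x y * (marg p Q' y / q y)))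
            = mutInfo p Q' + sD * distortion p d Q' + sP * (∑ x, ∑ y, p x * Q' x y * g y)
              + S1 := by
          calc ∑ x, ∑ y, (p x * Q' x y) * Real.log ((p x * Q' x y)
              / (p x * Q x y * (marg p Q' y / q y)))
              = ∑ x, (∑ y, p x * Q' x y * Real.log (Q' x y / marg p Q' y)
                + sD * (∑ y, p x * Q' x y * d x y) + sP * (∑ y, p x * Q' x y * g y)
                + p x * Real.log (∑ i, q i * A x i)) := by
                refine Finset.sum_congr rfl fun x _ => ?_
                calc ∑ y, (p x * Q' x y) * Real.log ((p x * Q' x y)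
                    / (p x * Q x y * (marg p Q' y / q y)))
                    = ∑ y, (p x * Q' x y * Real.log (Q' x y / marg p Q' y)
                      + sD * (p x * Q' x y * d x y) + sP * (p x * Q' x y * g y)
                      + (p x * Real.log (∑ i, q i * A x i)) * Q' x y) :=
                      Finset.sum_congr rfl fun y _ => key x y
                  _ = _ := by
                      simp only [Finset.sum_add_distrib, ← Finset.mul_sum]
                      rw [hst.2 x, mul_one]
            _ = _ := by
                rw [show mutInfo p Q'
                    = ∑ x, ∑ y, p x * Q' x y * Real.log (Q' x y / marg p Q' y) from rfl,
                  show distortion p d Q' = ∑ x, ∑ y, p x * Q' x y * d x y from rfl, hS1]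
                simp only [Finset.sum_add_distrib, ← Finset.mul_sum]
        rw [hswapQ'] at hsum
        linarith [hsum]
      linarith [stepA, hgibbs]
    have hmul3 := mul_le_mul_of_nonneg_left hE3 hsP
    have e2 : sP * fDiv f p q = sP * (S2 + S3) := by rw [hE2]
    linarith [hE1, hE4, hmul3, e2]
  refine ⟨hmarg, key2, ?_⟩
  -- part (iii)
  have hfeq : fDiv f p (marg p Q) = fDiv f p q := by
    unfold fDiv; exact Finset.sum_congr rfl fun y _ => by rw [hmarg y]
  have hmem : (mutInfo p Q : EReal) ∈ {r : EReal | ∃ Q'' : X → X → ℝ, IsStochastic Q'' ∧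
      (∀ y, 0 < marg p Q'' y) ∧ distortion p d Q'' ≤ distortion p d Q ∧
      fDiv f p (marg p Q'') ≤ fDiv f p q ∧ r = (mutInfo p Q'' : EReal)} := by
    exact ⟨Q, ⟨fun x y => (hQpos x y).le, hQrow⟩, fun y => by rw [hmarg y]; exact hq y,
      le_refl _, le_of_eq hfeq, rfl⟩
  refine le_antisymm (le_sInf ?_) (sInf_le hmem)
  rintro r ⟨Q', hst, hpos, hdist, hfd, rfl⟩
  rw [EReal.coe_le_coe_iff]
  have h2 := key2 Q' hst hpos
  linarith [mul_le_mul_of_nonneg_left hdist hsD, mul_le_mul_of_nonneg_left hfd hsP]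

end RDP
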